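/- Let S and A be nonempty finite sets and let p be a transition kernel as defined. Let 0 < μ ≤ 1 and assume that for every (s,a,s',d) ∈ S × A × S × {0,1} either p(s',d|s,a) = 0 or p(s',d|s,a) ≥ μ. Then for every natural number N, under the sampling measure P, the probability that the realization fails to produce a consistent kernel is at most 2|S|²|A| · (1 − μ)^N. -/
import Mathlib


open scoped ENNReal
open MeasureTheory Set

/-- under the sampling measure (`N` i.i.d. samples from `p(·,·|s,a)` drawn
independently for each `(s,a)`), if every nonzero transition probability is at least `μ`,
the probability of failing to produce a consistent kernel (i.e. some positive-probability
outcome `(s',d)` never appears among the `N` samples drawn at `(s,a)`) is at most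
`2|S|²|A|·(1−μ)^N`. -/
theorem kernel_builder_failure_bound
    {S A : Type*} [Fintype S] [Nonempty S] [Fintype A] [Nonempty A]
    [MeasurableSpace S] [MeasurableSingletonClass S]
    (p : S → A → PMF (S × Bool)) (μ : ℝ) (hμ0 : 0 < μ) (hμ1 : μ ≤ 1)
    (hlow : ∀ (s : S) (a : A) (s' : S) (d : Bool),
      p s a (s', d) = 0 ∨ ENNReal.ofReal μ ≤ p s a (s', d))
    (N : ℕ) :
    (Measure.pi fun sa : S × A => Measure.pi fun _ : Fin N => (p sa.1 sa.2).toMeasure)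
      {ω | ¬ ∀ (s : S) (a : A) (s' : S) (d : Bool),
        p s a (s', d) ≠ 0 → ∃ i : Fin N, ω (s, a) i = (s', d)}
      ≤ ENNReal.ofReal
        (2 * (Fintype.card S : ℝ) ^ 2 * (Fintype.card A : ℝ) * (1 - μ) ^ N) := by
  classical
  set ν := (Measure.pi fun sa : S × A => Measure.pi fun _ : Fin N => (p sa.1 sa.2).toMeasure)
    with hν
  have hsub : {ω : S × A → Fin N → S × Bool | ¬ ∀ (s : S) (a : A) (s' : S) (d : Bool),
        p s a (s', d) ≠ 0 → ∃ i : Fin N, ω (s, a) i = (s', d)}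
      ⊆ ⋃ (s : S) (a : A) (s' : S) (d : Bool),
        {ω : S × A → Fin N → S × Bool |
          p s a (s', d) ≠ 0 ∧ ∀ i : Fin N, ω (s, a) i ≠ (s', d)} := by
    intro ω hω
    push_neg at hω
    obtain ⟨s, a, s', d, h1, h2⟩ := hω
    exact mem_iUnion.2 ⟨s, mem_iUnion.2 ⟨a, mem_iUnion.2 ⟨s', mem_iUnion.2 ⟨d, h1, h2⟩⟩⟩⟩
  have hone : ENNReal.ofReal (1 - μ) ^ N ≠ ⊤ := by
    exact ENNReal.pow_ne_top ENNReal.ofReal_ne_top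
  have hbound : ∀ (s : S) (a : A) (s' : S) (d : Bool),
      ν {ω : S × A → Fin N → S × Bool |
          p s a (s', d) ≠ 0 ∧ ∀ i : Fin N, ω (s, a) i ≠ (s', d)}
        ≤ ENNReal.ofReal (1 - μ) ^ N := by
    intro s a s' d
    rcases hlow s a s' d with h0 | hge
    · have : {ω : S × A → Fin N → S × Bool |
          p s a (s', d) ≠ 0 ∧ ∀ i : Fin N, ω (s, a) i ≠ (s', d)} = ∅ := by
        ext ω; simp [h0]
      simp [this]
    · have hsetle : {ω : S × A → Fin N → S × Bool |
          p s a (s', d) ≠ 0 ∧ ∀ i : Fin N, ω (s, a) i ≠ (s', d)}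
          ⊆ Set.pi univ (fun sa : S × A => if sa = (s, a) then
              (Set.pi univ (fun _ : Fin N => ({(s', d)}ᶜ : Set (S × Bool)))) else univ) := by
        intro ω hω
        intro sa _
        by_cases hsa : sa = (s, a)
        · subst hsa
          simp only [if_pos rfl]
          intro i _
          exact hω.2 i
        · simp [hsa]
      refine le_trans (measure_mono hsetle) ?_
      rw [Measure.pi_pi]
      have hcoord : ∀ sa : S × A,
          (Measure.pi fun _ : Fin N => (p sa.1 sa.2).toMeasure)
            (if sa = (s, a) then
              (Set.pi univ (fun _ : Fin N => ({(s', d)}ᶜ : Set (S × Bool)))) else univ)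
          ≤ if sa = (s, a) then ENNReal.ofReal (1 - μ) ^ N else 1 := by
        intro sa
        by_cases hsa : sa = (s, a)
        · subst hsa
          simp only [eq_self_iff_true, if_true]
          rw [Measure.pi_pi]
          have hmeas : MeasurableSet ({((s', d) : S × Bool)} : Set (S × Bool)) :=
            measurableSet_singleton _
          have hsing : (p s a).toMeasure {((s', d) : S × Bool)} = p s a (s', d) :=
            PMF.toMeasure_apply_singleton _ _ hmeas
          have : (p s a).toMeasure ({((s', d) : S × Bool)}ᶜ)
              ≤ ENNReal.ofReal (1 - μ) := by
            have hcompl : (p s a).toMeasure ({((s', d) : S × Bool)}ᶜ)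
                = 1 - (p s a).toMeasure {((s', d) : S × Bool)} :=
              prob_compl_eq_one_sub hmeas
            rw [hcompl, hsing]
            calc 1 - p s a (s', d) ≤ 1 - ENNReal.ofReal μ :=
                  tsub_le_tsub_left hge 1
              _ = ENNReal.ofReal (1 - μ) := by
                  rw [ENNReal.ofReal_sub _ hμ0.le, ENNReal.ofReal_one]
          calc ∏ _i : Fin N, (p s a).toMeasure ({((s', d) : S × Bool)}ᶜ)
              = (p s a).toMeasure ({((s', d) : S × Bool)}ᶜ) ^ N := by
                simp [Finset.prod_const, Finset.card_univ]
            _ ≤ ENNReal.ofReal (1 - μ) ^ N := pow_le_pow_left' this N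
        · simp [hsa, measure_univ]
      calc ∏ sa : S × A, (Measure.pi fun _ : Fin N => (p sa.1 sa.2).toMeasure)
            (if sa = (s, a) then
              (Set.pi univ (fun _ : Fin N => ({(s', d)}ᶜ : Set (S × Bool)))) else univ)
          ≤ ∏ sa : S × A, (if sa = (s, a) then ENNReal.ofReal (1 - μ) ^ N else 1) :=
            Finset.prod_le_prod' fun sa _ => hcoord sa
        _ = ENNReal.ofReal (1 - μ) ^ N := by
            simp [Finset.prod_ite_eq']
  calc ν {ω : S × A → Fin N → S × Bool | ¬ ∀ (s : S) (a : A) (s' : S) (d : Bool),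
        p s a (s', d) ≠ 0 → ∃ i : Fin N, ω (s, a) i = (s', d)}
      ≤ ν (⋃ (s : S) (a : A) (s' : S) (d : Bool),
        {ω : S × A → Fin N → S × Bool |
          p s a (s', d) ≠ 0 ∧ ∀ i : Fin N, ω (s, a) i ≠ (s', d)}) := measure_mono hsub
    _ ≤ ∑ s : S, ∑ a : A, ∑ s' : S, ∑ d : Bool,
        ν {ω : S × A → Fin N → S × Bool |
          p s a (s', d) ≠ 0 ∧ ∀ i : Fin N, ω (s, a) i ≠ (s', d)} := by
        refine le_trans (measure_iUnion_fintype_le _ _) (Finset.sum_le_sum fun s _ => ?_)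
        refine le_trans (measure_iUnion_fintype_le _ _) (Finset.sum_le_sum fun a _ => ?_)
        refine le_trans (measure_iUnion_fintype_le _ _) (Finset.sum_le_sum fun s' _ => ?_)
        exact measure_iUnion_fintype_le _ _
    _ ≤ ∑ _s : S, ∑ _a : A, ∑ _s' : S, ∑ _d : Bool, ENNReal.ofReal (1 - μ) ^ N := by
        refine Finset.sum_le_sum fun s _ => Finset.sum_le_sum fun a _ =>
          Finset.sum_le_sum fun s' _ => Finset.sum_le_sum fun d _ => hbound s a s' d
    _ = (Fintype.card S : ℝ≥0∞) * (Fintype.card A) * (Fintype.card S) * 2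
          * ENNReal.ofReal (1 - μ) ^ N := by
        simp only [Finset.sum_const, Finset.card_univ, nsmul_eq_mul]
        simp only [Fintype.card_bool]
        push_cast
        ring
    _ = ENNReal.ofReal
        (2 * (Fintype.card S : ℝ) ^ 2 * (Fintype.card A : ℝ) * (1 - μ) ^ N) := by
        rw [← ENNReal.ofReal_pow (by linarith : (0:ℝ) ≤ 1 - μ)]
        rw [show (2 * (Fintype.card S : ℝ) ^ 2 * (Fintype.card A : ℝ)) * ((1 - μ)) ^ N
          = ((Fintype.card S : ℝ) * (Fintype.card A) * (Fintype.card S) * 2) * (1 - μ) ^ N by ring]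
        rw [ENNReal.ofReal_mul (by positivity)]
        congr 1
        rw [show ((Fintype.card S : ℝ) * (Fintype.card A) * (Fintype.card S) * 2)
          = ((Fintype.card S * Fintype.card A * Fintype.card S * 2 : ℕ) : ℝ) by push_cast; ring]
        rw [ENNReal.ofReal_natCast]
        push_cast
        ring
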